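/- In the instance D(G,≻,ε): if x is a symmetric data exchange in which every vertex agent has nonnegative utility (as holds in any core-stable exchange), then for every vertex v one has Σ_{e∈E(v)} f⁺(e) ≤ 1 + ε. -/
import Mathlib


open scoped BigOperators
open Classical

namespace DataExchangeHGM

noncomputable section

/-- A data exchange on an arbitrary agent type: entries in `[0,1]`, zero diagonal. -/
def IsExch {A : Type*} (x : A → A → ℝ) : Prop :=
  (∀ a b, 0 ≤ x a b ∧ x a b ≤ 1) ∧ ∀ a, x a a = 0

/-- An exchange over the coalition `U`: zero outside `U × U`. -/
def IsExchOver {A : Type*} (U : Set A) (x : A → A → ℝ) : Prop :=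
  IsExch x ∧ ∀ a b, (a ∉ U ∨ b ∉ U) → x a b = 0

/-- Core stability with respect to a utility function `u` (taking the whole exchange). -/
def CoreStable {A : Type*} (u : (A → A → ℝ) → A → ℝ) (x : A → A → ℝ) : Prop :=
  ¬ ∃ (U : Set A) (y : A → A → ℝ), U.Nonempty ∧ IsExchOver U y ∧ ∀ a ∈ U, u x a < u y a

variable {V E : Type*}

/-- The agents of the instance `D(G,≻,ε)`: one edge agent and one intermediate agent per
hyperedge, and one vertex agent per vertex. -/
abbrev Agent (V E : Type*) := E ⊕ (E ⊕ V)

/-- The edge agent of hyperedge `e`. -/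
def edgeA (e : E) : Agent V E := Sum.inl e

/-- The intermediate agent `i_e` of hyperedge `e`. -/
def interA (e : E) : Agent V E := Sum.inr (Sum.inl e)

/-- The vertex agent of vertex `v`. -/
def vertA (v : V) : Agent V E := Sum.inr (Sum.inr v)

variable [Fintype E]

/-- `E(v)`: the hyperedges containing `v`, where `ends e : Fin 3 → V` lists the three
vertices of `e`. -/
def Ev (ends : E → Fin 3 → V) (v : V) : Finset E :=
  Finset.univ.filter (fun e => ∃ t, ends e t = v)

/-- The weight `w_v(e)`: `d+H+1`, `d+H`, or `H` according to the rank (0 = most preferred,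
1 = second, 2 = least) of `e` in `v`'s preference order. -/
def weight (d H : ℝ) (rank : V → E → Fin 3) (v : V) (e : E) : ℝ :=
  if rank v e = 0 then d + H + 1 else if rank v e = 1 then d + H else H

/-- Utility of the edge agent `e`: payoff `x_{i_e,e}` minus cost `(1-ε)·x_{e,i_e}`. -/
def uEdge (ε : ℝ) (x : Agent V E → Agent V E → ℝ) (e : E) : ℝ :=
  x (interA e) (edgeA e) - (1 - ε) * x (edgeA e) (interA e)

/-- Utility of the intermediate agent `i_e`. -/
def uInter (ε : ℝ) (ends : E → Fin 3 → V) (x : Agent V E → Agent V E → ℝ) (e : E) : ℝ :=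
  min (x (edgeA e) (interA e))
      (min (x (vertA (ends e 0)) (interA e))
        (min (x (vertA (ends e 1)) (interA e)) (x (vertA (ends e 2)) (interA e))))
    - (1 - ε) *
      max (x (interA e) (edgeA e))
        (max (x (interA e) (vertA (ends e 0)))
          (max (x (interA e) (vertA (ends e 1))) (x (interA e) (vertA (ends e 2)))))

/-- Utility of the vertex agent `v`. -/
def uVert (d H Γ : ℝ) (ends : E → Fin 3 → V) (rank : V → E → Fin 3)
    (x : Agent V E → Agent V E → ℝ) (v : V) : ℝ :=
  (∑ e ∈ Ev ends v, weight d H rank v e * x (interA e) (vertA v))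
    - Γ * max ((∑ e ∈ Ev ends v, x (vertA v) (interA e)) - 1) 0

/-- The utility function of the instance `D(G,≻,ε)`. -/
def util (ε d H Γ : ℝ) (ends : E → Fin 3 → V) (rank : V → E → Fin 3)
    (x : Agent V E → Agent V E → ℝ) : Agent V E → ℝ
  | Sum.inl e => uEdge ε x e
  | Sum.inr (Sum.inl e) => uInter ε ends x e
  | Sum.inr (Sum.inr v) => uVert d H Γ ends rank x v

/-- A symmetric exchange: for every hyperedge `e`, all shares from `i_e` to the edge agent
and the three vertex agents agree (their common value is `f⁻(e)`), and all shares towards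
`i_e` agree (their common value is `f⁺(e)`). -/
def Symm (ends : E → Fin 3 → V) (x : Agent V E → Agent V E → ℝ) : Prop :=
  ∀ e : E, (∀ t : Fin 3, x (interA e) (vertA (ends e t)) = x (interA e) (edgeA e)) ∧
    (∀ t : Fin 3, x (vertA (ends e t)) (interA e) = x (edgeA e) (interA e))

/-- `f⁻(e)`: the common outgoing share of `i_e` in a symmetric exchange. -/
def fminus (x : Agent V E → Agent V E → ℝ) (e : E) : ℝ := x (interA e) (edgeA e)

/-- `f⁺(e)`: the common incoming share of `i_e` in a symmetric exchange. -/
def fplus (x : Agent V E → Agent V E → ℝ) (e : E) : ℝ := x (edgeA e) (interA e)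

/-- In `D(G,≻,ε)`, if `x` is a symmetric data exchange in which every
vertex agent has nonnegative utility, then `Σ_{e ∈ E(v)} f⁺(e) ≤ 1 + ε` for every vertex. -/
theorem sum_fplus_le
    (V E : Type*) [Fintype V] [Fintype E]
    (ends : E → Fin 3 → V) (hends : ∀ e, Function.Injective (ends e))
    (hdeg : ∀ v, (Ev ends v).card ≤ 3)
    (rank : V → E → Fin 3)
    (hrank_inj : ∀ v, ∀ e ∈ Ev ends v, ∀ e' ∈ Ev ends v, rank v e = rank v e' → e = e')
    (hrank_seg : ∀ v, ∀ e ∈ Ev ends v, (rank v e : ℕ) < (Ev ends v).card)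
    (ε d H Γ : ℝ) (hε0 : 0 < ε) (hε1 : ε < 1/1000)
    (hd : d = ε ^ (-(1:ℝ)/4)) (hH : H = ε ^ (-(1:ℝ)/2)) (hΓ : Γ = 3*(d+H+1)/ε)
    (x : Agent V E → Agent V E → ℝ) (hx : IsExch x) (hsymm : Symm ends x)
    (huv : ∀ v : V, 0 ≤ uVert d H Γ ends rank x v) :
    ∀ v : V, (∑ e ∈ Ev ends v, fplus x e) ≤ 1 + ε := by
  intro v
  have hd0 : (0:ℝ) < d := hd ▸ Real.rpow_pos_of_pos hε0 _
  have hH0 : (0:ℝ) < H := hH ▸ Real.rpow_pos_of_pos hε0 _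
  have hw : ∀ e, 0 ≤ weight d H rank v e ∧ weight d H rank v e ≤ d + H + 1 := by
    intro e; unfold weight; split_ifs <;> constructor <;> linarith
  have hsum : (∑ e ∈ Ev ends v, fplus x e) = ∑ e ∈ Ev ends v, x (vertA v) (interA e) := by
    apply Finset.sum_congr rfl
    intro e he
    obtain ⟨t, ht⟩ := (Finset.mem_filter.mp he).2
    rw [fplus, ← ht]
    exact ((hsymm e).2 t).symm
  rw [hsum]
  set S := ∑ e ∈ Ev ends v, x (vertA v) (interA e) with hS
  have hu := huv v
  unfold uVert at hu
  have hpay : (∑ e ∈ Ev ends v, weight d H rank v e * x (interA e) (vertA v))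
      ≤ 3 * (d + H + 1) := by
    calc (∑ e ∈ Ev ends v, weight d H rank v e * x (interA e) (vertA v))
        ≤ ∑ _e ∈ Ev ends v, (d + H + 1) := by
          apply Finset.sum_le_sum; intro e _
          have h1 := hw e
          have h2 := hx.1 (interA e) (vertA v)
          nlinarith [h1.1, h1.2, h2.1, h2.2]
      _ = ((Ev ends v).card : ℝ) * (d + H + 1) := by
          rw [Finset.sum_const, nsmul_eq_mul]
      _ ≤ 3 * (d + H + 1) := by
          have h3 : ((Ev ends v).card : ℝ) ≤ 3 := by exact_mod_cast hdeg v
          nlinarith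
  have hΓ0 : 0 < Γ := by
    rw [hΓ]
    have : (0:ℝ) < 3*(d+H+1) := by linarith
    exact div_pos this hε0
  have hΓε : Γ * ε = 3 * (d+H+1) := by
    rw [hΓ]; field_simp
  have hmax : max (S - 1) 0 ≤ ε := by
    by_contra h
    push_neg at h
    have hlt : Γ * ε < Γ * max (S-1) 0 := mul_lt_mul_of_pos_left h hΓ0
    linarith
  have hle := le_max_left (S - 1) (0:ℝ)
  linarith

end
end DataExchangeHGM
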